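/- arXiv:1310.6583 — 4 statements merged into one kernel-verified Lean document; each statement's English description precedes it below -/
import Mathlib

section
/- Let p be a prime and let s ≥ 1, k ≥ 1, and 1 ≤ j ≤ s be integers. Then v_p(s) ≤ v_p( binom(s,j) · (k+s-1)(k+s-2)⋯(k+s-j) ), where v_p denotes the p-adic valuation and the product has j consecutive factors. -/
lemma padic_le_of_dvd {p a b : ℕ} (hp : p.Prime) (h : a ∣ b) (hb : b ≠ 0) :
    padicValNat p a ≤ padicValNat p b := by
  haveI := Fact.mk hp
  obtain ⟨c, rfl⟩ := h
  have ha : a ≠ 0 := by rintro rfl; simp at hb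
  have hc : c ≠ 0 := by rintro rfl; simp at hb
  rw [padicValNat.mul ha hc]
  exact Nat.le_add_right _ _

/-- For a prime `p` and integers `s ≥ 1`, `k ≥ 1`, `1 ≤ j ≤ s`:
`v_p(s) ≤ v_p( binom(s,j) · (k+s-1)(k+s-2)⋯(k+s-j) )`. -/
theorem stmt0 (p : ℕ) (hp : p.Prime) (s k j : ℕ) (hs : 1 ≤ s) (hk : 1 ≤ k)
    (hj1 : 1 ≤ j) (hjs : j ≤ s) :
    padicValNat p s ≤
      padicValNat p (Nat.choose s j * ∏ m ∈ Finset.Icc 1 j, (k + s - m)) := by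
  haveI := Fact.mk hp
  -- the product is the descending factorial
  have hprod : (∏ m ∈ Finset.Icc 1 j, (k + s - m)) = (k + s - 1).descFactorial j := by
    rw [Nat.descFactorial_eq_prod_range]
    rw [← Finset.Ico_add_one_right_eq_Icc, Finset.prod_Ico_eq_prod_range]
    exact Finset.prod_congr rfl fun i _ => by omega
  have hprodne : (∏ m ∈ Finset.Icc 1 j, (k + s - m)) ≠ 0 := by
    rw [hprod, Ne, Nat.descFactorial_eq_zero_iff_lt]; omega
  have hchoosene : Nat.choose s j ≠ 0 := (Nat.choose_pos hjs).ne'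
  have hjdvd : j ∣ ∏ m ∈ Finset.Icc 1 j, (k + s - m) := by
    rw [hprod]
    exact (Nat.dvd_factorial hj1 le_rfl).trans (Nat.factorial_dvd_descFactorial _ _)
  -- key identity: s * C(s-1, j-1) = C(s, j) * j
  have hid : s * Nat.choose (s - 1) (j - 1) = Nat.choose s j * j := by
    have := Nat.add_one_mul_choose_eq (s - 1) (j - 1)
    simp only [Nat.succ_eq_add_one, show s - 1 + 1 = s by omega,
      show j - 1 + 1 = j by omega] at this
    exact this
  calc padicValNat p s
      ≤ padicValNat p (s * Nat.choose (s - 1) (j - 1)) :=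
        padic_le_of_dvd hp (Dvd.intro _ rfl)
          (Nat.mul_ne_zero (by omega) (Nat.choose_pos (by omega)).ne')
    _ = padicValNat p (Nat.choose s j * j) := by rw [hid]
    _ = padicValNat p (Nat.choose s j) + padicValNat p j :=
        padicValNat.mul hchoosene (by omega)
    _ ≤ padicValNat p (Nat.choose s j) + padicValNat p (∏ m ∈ Finset.Icc 1 j, (k + s - m)) :=
        Nat.add_le_add_left (padic_le_of_dvd hp hjdvd hprodne) _
    _ = padicValNat p (Nat.choose s j * ∏ m ∈ Finset.Icc 1 j, (k + s - m)) :=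
        (padicValNat.mul hchoosene hprodne).symm
end

section
/- Let R be a commutative ℚ-algebra. Define on R[[q]][X] the operators Θ (acting on q-expansions by Θ(∑ aₙ qⁿ) = ∑ n aₙ qⁿ, extended X-coefficientwise) and, for each integer m, δ_m(∑ F_i X^i) = ∑ (ΘF_i) X^i + (m - i) F_i X^{i+1}. Set δ_k^s = δ_{k+2s-2} ∘ ⋯ ∘ δ_{k+2} ∘ δ_k (s factors). Then for every f ∈ R[[q]] (an element of degree 0 in X) and all integers k, s with s ≥ 0: δ_k^s f = ∑_{j=0}^{s} binom(s,j) · ( ∏_{m=1}^{j}(k+s-m) ) · (Θ^{s-j} f) · X^j. -/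
noncomputable section

/-- The operator `Θ = q·d/dq` on formal power series: `Θ(∑ aₙ qⁿ) = ∑ n aₙ qⁿ`. -/
def thetaQ {R : Type*} [CommRing R] (f : PowerSeries R) : PowerSeries R :=
  PowerSeries.mk fun n => (n : R) * PowerSeries.coeff n f

/-- The algebraic Maaß–Shimura operator of weight `m` on `R[[q]][X]`:
`δ_m(∑ F_i X^i) = ∑ (ΘF_i) X^i + (m - i) F_i X^{i+1}`. -/
def delta {R : Type*} [CommRing R] (m : ℤ) (F : Polynomial (PowerSeries R)) :
    Polynomial (PowerSeries R) :=
  F.sum fun i a =>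
    Polynomial.C (thetaQ a) * Polynomial.X ^ i
      + Polynomial.C (((m - (i : ℤ) : ℤ) : PowerSeries R) * a) * Polynomial.X ^ (i + 1)

/-- `δ_k^s = δ_{k+2s-2} ∘ ⋯ ∘ δ_{k+2} ∘ δ_k` (s factors). -/
def deltaIter {R : Type*} [CommRing R] (k : ℤ) :
    ℕ → Polynomial (PowerSeries R) → Polynomial (PowerSeries R)
  | 0 => id
  | s + 1 => fun F => delta (k + 2 * s) (deltaIter k s F)

section Aux

variable {R : Type*} [CommRing R]

lemma thetaQ_zero : thetaQ (0 : PowerSeries R) = 0 := by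
  ext n; simp [thetaQ]

lemma thetaQ_add (a b : PowerSeries R) : thetaQ (a + b) = thetaQ a + thetaQ b := by
  ext n; simp [thetaQ]; ring

lemma intCast_eq_C (z : ℤ) : ((z : ℤ) : PowerSeries R) = PowerSeries.C (z : R) :=
  (map_intCast (PowerSeries.C (R := R)) z).symm

lemma thetaQ_intCast_mul (z : ℤ) (g : PowerSeries R) :
    thetaQ ((z : PowerSeries R) * g) = (z : PowerSeries R) * thetaQ g := by
  ext n
  simp only [thetaQ, intCast_eq_C, PowerSeries.coeff_C_mul, PowerSeries.coeff_mk]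
  ring

lemma delta_add (m : ℤ) (F G : Polynomial (PowerSeries R)) :
    delta m (F + G) = delta m F + delta m G := by
  unfold delta
  refine Polynomial.sum_add_index F G _ (fun i => ?_) (fun i a b => ?_)
  · simp [thetaQ_zero]
  · rw [thetaQ_add]
    simp only [map_add, mul_add, add_mul, Polynomial.C_add]
    ring

lemma delta_zero (m : ℤ) : delta m (0 : Polynomial (PowerSeries R)) = 0 :=
  Polynomial.sum_zero_index _

lemma delta_sum (m : ℤ) {ι : Type*} (t : Finset ι) (F : ι → Polynomial (PowerSeries R)) :
    delta m (∑ j ∈ t, F j) = ∑ j ∈ t, delta m (F j) := by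
  classical
  induction t using Finset.cons_induction with
  | empty => simp [delta_zero]
  | cons a t ha ih => simp only [Finset.sum_cons, delta_add, ih]

lemma delta_monomial (m : ℤ) (i : ℕ) (a : PowerSeries R) :
    delta m (Polynomial.C a * Polynomial.X ^ i) =
      Polynomial.C (thetaQ a) * Polynomial.X ^ i
        + Polynomial.C (((m - (i : ℤ) : ℤ) : PowerSeries R) * a) * Polynomial.X ^ (i + 1) := by
  rw [Polynomial.C_mul_X_pow_eq_monomial]
  unfold delta
  rw [Polynomial.sum_monomial_index]
  simp [thetaQ_zero]

/-- The coefficient `binom(s,j) · ∏_{m=1}^{j}(k+s-m)`. -/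
def Acoef (k : ℤ) (s j : ℕ) : ℤ :=
  (s.choose j : ℤ) * ∏ m ∈ Finset.Icc 1 j, (k + (s : ℤ) - (m : ℤ))

lemma prod_shift (k : ℤ) (s j : ℕ) :
    ∏ m ∈ Finset.Icc 1 (j+1), (k + (s : ℤ) + 1 - (m : ℤ)) =
      (k + s) * ∏ m ∈ Finset.Icc 1 j, (k + (s : ℤ) - (m : ℤ)) := by
  induction j with
  | zero => simp
  | succ n ihn =>
    rw [Finset.prod_Icc_succ_top (show 1 ≤ n+1+1 by omega)
        (fun m : ℕ => k + (s:ℤ) + 1 - (m:ℤ)), ihn,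
      Finset.prod_Icc_succ_top (show 1 ≤ n+1 by omega) (fun m : ℕ => k + (s:ℤ) - (m:ℤ))]
    push_cast
    ring

lemma keyA (k : ℤ) (s j : ℕ) (hj : j ≤ s) :
    Acoef k (s+1) (j+1) =
      Acoef k s (j+1) + (k + 2*(s:ℤ) - (j:ℤ)) * Acoef k s j := by
  have hc : ((s.choose (j+1) : ℤ)) * ((j:ℤ)+1) = (s.choose j : ℤ) * ((s:ℤ) - (j:ℤ)) := by
    have h := Nat.choose_succ_right_eq s j
    zify [hj] at h
    linarith [h]
  have hcc : (((s+1).choose (j+1) : ℕ) : ℤ) = (s.choose j : ℤ) + (s.choose (j+1) : ℤ) := by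
    exact_mod_cast Nat.choose_succ_succ s j
  simp only [Acoef]
  have hcast : ∀ m ∈ Finset.Icc 1 (j+1), (k + ((s+1:ℕ) : ℤ) - (m : ℤ)) = (k + (s:ℤ) + 1 - (m:ℤ)) := by
    intro m _; push_cast; ring
  rw [Finset.prod_congr rfl hcast, prod_shift,
    Finset.prod_Icc_succ_top (show 1 ≤ j + 1 by omega) (fun m : ℕ => k + (s:ℤ) - (m:ℤ)), hcc]
  push_cast
  linear_combination (∏ m ∈ Finset.Icc 1 j, (k + (s:ℤ) - (m:ℤ))) * hc

lemma Acoef_zero (k : ℤ) (s : ℕ) : Acoef k s 0 = 1 := by simp [Acoef]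

lemma Acoef_top (k : ℤ) (s : ℕ) : Acoef k s (s+1) = 0 := by
  simp [Acoef, Nat.choose_succ_self]

lemma stmt_aux {R : Type*} [CommRing R] (k : ℤ) (s : ℕ) (f : PowerSeries R) :
    deltaIter k s (Polynomial.C f) =
      ∑ j ∈ Finset.range (s + 1),
        Polynomial.C ((Acoef k s j : PowerSeries R) * ((thetaQ (R := R))^[s - j] f)) *
          Polynomial.X ^ j := by
  induction s with
  | zero => simp [deltaIter, Acoef]
  | succ s ih =>
    have e1 : deltaIter k (s+1) (Polynomial.C f)
        = delta (k + 2 * (s:ℤ)) (deltaIter k s (Polynomial.C f)) := rfl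
    rw [e1, ih, delta_sum]
    simp only [delta_monomial]
    rw [Finset.sum_add_distrib]
    have hU : (∑ j ∈ Finset.range (s+1),
          Polynomial.C (thetaQ ((Acoef k s j : PowerSeries R) * (thetaQ (R := R))^[s - j] f)) *
            Polynomial.X ^ j)
        = ∑ j ∈ Finset.range (s+1+1),
          Polynomial.C (thetaQ ((Acoef k s j : PowerSeries R) * (thetaQ (R := R))^[s - j] f)) *
            Polynomial.X ^ j := by
      rw [Finset.sum_range_succ _ (s+1), Acoef_top]
      simp [thetaQ_zero]
    rw [hU,
      Finset.sum_range_succ' (fun j => Polynomial.C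
        (thetaQ ((Acoef k s j : PowerSeries R) * (thetaQ (R := R))^[s - j] f)) *
          Polynomial.X ^ j) (s+1),
      Finset.sum_range_succ' (fun j => Polynomial.C
        ((Acoef k (s+1) j : PowerSeries R) * (thetaQ (R := R))^[s + 1 - j] f) *
          Polynomial.X ^ j) (s+1)]
    have hU0 : Polynomial.C (thetaQ ((Acoef k s 0 : PowerSeries R) * (thetaQ (R := R))^[s - 0] f)) *
          Polynomial.X ^ 0
        = Polynomial.C ((Acoef k (s+1) 0 : PowerSeries R) * (thetaQ (R := R))^[s + 1 - 0] f) *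
          Polynomial.X ^ 0 := by
      simp [Acoef_zero, Function.iterate_succ_apply']
    have hmain : (∑ j ∈ Finset.range (s+1),
          Polynomial.C (thetaQ ((Acoef k s (j+1) : PowerSeries R) *
            (thetaQ (R := R))^[s - (j+1)] f)) * Polynomial.X ^ (j+1))
        + ∑ j ∈ Finset.range (s+1),
          Polynomial.C (((k + 2*(s:ℤ) - (j:ℤ) : ℤ) : PowerSeries R) *
            ((Acoef k s j : PowerSeries R) * (thetaQ (R := R))^[s - j] f)) * Polynomial.X ^ (j+1)
        = ∑ j ∈ Finset.range (s+1),
          Polynomial.C ((Acoef k (s+1) (j+1) : PowerSeries R) *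
            (thetaQ (R := R))^[s + 1 - (j+1)] f) * Polynomial.X ^ (j+1) := by
      rw [← Finset.sum_add_distrib]
      refine Finset.sum_congr rfl fun j hj => ?_
      have hjs : j ≤ s := Nat.lt_succ_iff.mp (Finset.mem_range.mp hj)
      have hsub : s + 1 - (j+1) = s - j := by omega
      rw [hsub, ← add_mul, ← Polynomial.C_add]
      have hth : thetaQ ((Acoef k s (j+1) : PowerSeries R) * (thetaQ (R := R))^[s - (j+1)] f)
          = (Acoef k s (j+1) : PowerSeries R) * (thetaQ (R := R))^[s - j] f := by
        rcases Nat.lt_or_ge j s with h | h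
        · rw [thetaQ_intCast_mul]
          congr 1
          have h2 : s - j = (s - (j+1)) + 1 := by omega
          rw [h2, Function.iterate_succ_apply']
        · have hjs' : j = s := le_antisymm hjs h
          subst hjs'
          rw [Acoef_top]
          simp [thetaQ_zero]
      rw [hth]
      congr 1
      rw [keyA k s j hjs]
      push_cast
      ring
    calc (∑ j ∈ Finset.range (s+1),
            Polynomial.C (thetaQ ((Acoef k s (j+1) : PowerSeries R) *
              (thetaQ (R := R))^[s - (j+1)] f)) * Polynomial.X ^ (j+1)
          + Polynomial.C (thetaQ ((Acoef k s 0 : PowerSeries R) *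
              (thetaQ (R := R))^[s - 0] f)) * Polynomial.X ^ 0)
        + ∑ j ∈ Finset.range (s+1),
            Polynomial.C (((k + 2*(s:ℤ) - (j:ℤ) : ℤ) : PowerSeries R) *
              ((Acoef k s j : PowerSeries R) * (thetaQ (R := R))^[s - j] f)) *
              Polynomial.X ^ (j+1)
        = ((∑ j ∈ Finset.range (s+1),
            Polynomial.C (thetaQ ((Acoef k s (j+1) : PowerSeries R) *
              (thetaQ (R := R))^[s - (j+1)] f)) * Polynomial.X ^ (j+1))
          + ∑ j ∈ Finset.range (s+1),
            Polynomial.C (((k + 2*(s:ℤ) - (j:ℤ) : ℤ) : PowerSeries R) *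
              ((Acoef k s j : PowerSeries R) * (thetaQ (R := R))^[s - j] f)) *
              Polynomial.X ^ (j+1))
          + Polynomial.C (thetaQ ((Acoef k s 0 : PowerSeries R) *
              (thetaQ (R := R))^[s - 0] f)) * Polynomial.X ^ 0 := add_right_comm _ _ _
      _ = (∑ j ∈ Finset.range (s+1),
            Polynomial.C ((Acoef k (s+1) (j+1) : PowerSeries R) *
              (thetaQ (R := R))^[s + 1 - (j+1)] f) * Polynomial.X ^ (j+1))
          + Polynomial.C ((Acoef k (s+1) 0 : PowerSeries R) *
              (thetaQ (R := R))^[s + 1 - 0] f) * Polynomial.X ^ 0 := by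
        rw [hmain, hU0]

end Aux

/-- For `f ∈ R[[q]]` (degree 0 in `X`):
`δ_k^s f = ∑_{j=0}^{s} binom(s,j) · (∏_{m=1}^{j}(k+s-m)) · (Θ^{s-j} f) · X^j`. -/
theorem stmt1 {R : Type*} [CommRing R] [Algebra ℚ R] (k : ℤ) (s : ℕ) (f : PowerSeries R) :
    deltaIter k s (Polynomial.C f) =
      ∑ j ∈ Finset.range (s + 1),
        Polynomial.C
          ((((s.choose j : ℤ) * ∏ m ∈ Finset.Icc 1 j, (k + (s : ℤ) - (m : ℤ)) : ℤ) :
              PowerSeries R) * ((thetaQ (R := R))^[s - j] f)) * Polynomial.X ^ j := by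
  simpa only [Acoef] using stmt_aux k s f
end
end

section
/- Let f = ∑_{i=0}^{r} f_i(q) X^i with f_i ∈ ℚ_p[[q]], such that f_r ≠ 0 and all coefficients of all f_i have p-adic valuation bounded below (i.e., f has finite sup-norm |f| = sup over all coefficients of |a|_p, and |f_r| is finite and nonzero). Suppose U_p f = λ f for some λ ∈ ℚ_p^×, where U_p(∑_i∑_n a_n^{(i)}qⁿX^i) = ∑_i∑_n p^i a_{pn}^{(i)}qⁿX^i. Then v_p(λ) ≥ r. -/
noncomputable section

/-- The `U_p` operator on formal power series: `coeff n ↦ coeff (p·n)`. -/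
def upQ {R : Type*} [CommRing R] (p : ℕ) (f : PowerSeries R) : PowerSeries R :=
  PowerSeries.mk fun n => PowerSeries.coeff (R := R) (p * n) f

/-- The `U_p` operator on `R[[q]][X]`:
`U_p(∑_i ∑_n a_n^{(i)} qⁿ X^i) = ∑_i ∑_n p^i a_{pn}^{(i)} qⁿ X^i`. -/
def upP {R : Type*} [CommRing R] (p : ℕ) (F : Polynomial (PowerSeries R)) :
    Polynomial (PowerSeries R) :=
  F.sum fun i a => Polynomial.C ((p : PowerSeries R) ^ i * upQ p a) * Polynomial.X ^ i

lemma upQ_zero {R : Type*} [CommRing R] (p : ℕ) : upQ (R := R) p 0 = 0 := by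
  ext n; simp [upQ]

lemma upP_coeff {R : Type*} [CommRing R] (p : ℕ) (F : Polynomial (PowerSeries R)) (r : ℕ) :
    (upP p F).coeff r = (p : PowerSeries R) ^ r * upQ p (F.coeff r) := by
  rw [upP, Polynomial.sum_def, Polynomial.finset_sum_coeff]
  simp only [Polynomial.coeff_C_mul, Polynomial.coeff_X_pow, mul_ite, mul_one, mul_zero]
  rw [Finset.sum_ite_eq F.support r (fun i => (p : PowerSeries R) ^ i * upQ p (F.coeff i))]
  by_cases h : r ∈ F.support
  · simp [h]
  · simp [h, Polynomial.notMem_support_iff.mp h, upQ_zero]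

/-- If `f = ∑_{i=0}^r f_i X^i` with `f_r ≠ 0`, all coefficients bounded in norm, and
`U_p f = λ f` with `λ ≠ 0`, then `v_p(λ) ≥ r`. -/
theorem stmt8 (p : ℕ) [Fact p.Prime] (r : ℕ) (f : Polynomial (PowerSeries ℚ_[p]))
    (hdeg : f.natDegree ≤ r) (hlead : f.coeff r ≠ 0)
    (hbdd : ∃ C : ℝ, ∀ i n, ‖PowerSeries.coeff (R := ℚ_[p]) n (f.coeff i)‖ ≤ C)
    (lam : ℚ_[p]) (hlam : lam ≠ 0)
    (heig : upP p f = Polynomial.C (PowerSeries.C (R := ℚ_[p]) lam) * f) :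
    (r : ℤ) ≤ lam.valuation := by
  obtain ⟨C, hC⟩ := hbdd
  set a : ℕ → ℚ_[p] := fun n => PowerSeries.coeff (R := ℚ_[p]) n (f.coeff r) with ha
  have key : ∀ n : ℕ, (p : ℚ_[p]) ^ r * a (p * n) = lam * a n := by
    intro n
    have h2 := congrArg (fun F : Polynomial (PowerSeries ℚ_[p]) =>
      PowerSeries.coeff (R := ℚ_[p]) n (F.coeff r)) heig
    simp only [upP_coeff, Polynomial.coeff_C_mul] at h2
    have hp : (p : PowerSeries ℚ_[p]) ^ r = PowerSeries.C (R := ℚ_[p]) ((p : ℚ_[p]) ^ r) := by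
      rw [← map_natCast (PowerSeries.C (R := ℚ_[p])) p, ← map_pow]
    rw [hp, PowerSeries.coeff_C_mul, PowerSeries.coeff_C_mul] at h2
    simpa [upQ, ha] using h2
  -- norms
  have hp1 : (1:ℝ) < p := by exact_mod_cast (Fact.out : p.Prime).one_lt
  by_contra hcon
  push_neg at hcon
  set t : ℝ := ((p:ℝ) ^ (-(r:ℤ))) / ‖lam‖ with ht
  have hlamnorm : ‖lam‖ = (p:ℝ) ^ (-lam.valuation) := Padic.norm_eq_zpow_neg_valuation hlam
  have hlampos : (0:ℝ) < ‖lam‖ := norm_pos_iff.mpr hlam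
  have ht1 : t < 1 := by
    rw [ht, div_lt_one hlampos, hlamnorm]
    exact zpow_lt_zpow_right₀ hp1 (by omega)
  have ht0 : 0 ≤ t := div_nonneg (zpow_nonneg (by positivity) _) hlampos.le
  have hnorm : ∀ n, ‖a n‖ = t * ‖a (p * n)‖ := by
    intro n
    have := congrArg norm (key n)
    rw [norm_mul, norm_mul] at this
    have hpr : ‖(p : ℚ_[p]) ^ r‖ = (p:ℝ) ^ (-(r:ℤ)) := by
      rw [norm_pow, Padic.norm_p, zpow_neg, zpow_natCast, inv_pow]
    rw [hpr] at this
    rw [ht, div_mul_eq_mul_div, eq_div_iff hlampos.ne', mul_comm]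
    linarith
  have hiter : ∀ n k, ‖a n‖ ≤ t ^ k * C := by
    intro n k
    induction k generalizing n with
    | zero => simpa using hC r n
    | succ k ih =>
      rw [hnorm n]
      calc t * ‖a (p * n)‖ ≤ t * (t ^ k * C) := by
            exact mul_le_mul_of_nonneg_left (ih (p * n)) ht0
        _ = t ^ (k + 1) * C := by ring
  have hzero : ∀ n, a n = 0 := by
    intro n
    have hlim : Filter.Tendsto (fun k => t ^ k * C) Filter.atTop (nhds 0) := by
      simpa using (tendsto_pow_atTop_nhds_zero_of_lt_one ht0 ht1).mul_const C
    have : ‖a n‖ ≤ 0 := ge_of_tendsto hlim (Filter.Eventually.of_forall (hiter n))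
    simpa using le_antisymm this (norm_nonneg _)
  exact hlead (PowerSeries.ext fun n => by simpa using hzero n)
end
end

section
/- Let p be an odd prime, n ≥ 1, and let k, k', s, s' be nonnegative integers with k ≡ k' (mod p^n(p−1)), s' = s + s₀·p^n(p−1) for some s₀ ≥ 1 with s₀·p^n(p−1) ≥ n+1. Let f, f' ∈ ℤ_p[[q]][X] have the same degree in X and satisfy f ≡ f' (mod p^n) coefficientwise. Then (δ_k^s f)|ι_p ≡ δ_{k'}^{s'} f' (mod p^n), where δ_m is the operator ∑F_iX^i ↦ ∑ΘF_iX^i + (m−i)F_iX^{i+1}, δ_m^s its iterate with weights increasing by 2, and ι_p is applied to each X-coefficient by deleting the qⁿ-terms with p | n. -/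
noncomputable section

/-- The operator `ι_p(∑ aₙ qⁿ) = ∑_{p ∤ n} aₙ qⁿ` on power series. -/
def iotaQ {R : Type*} [CommRing R] (p : ℕ) (f : PowerSeries R) : PowerSeries R :=
  PowerSeries.mk fun n => if p ∣ n then 0 else PowerSeries.coeff n f

/-- `ι_p` applied to each `X`-coefficient of an element of `R[[q]][X]`. -/
def iotaPoly {R : Type*} [CommRing R] (p : ℕ) (F : Polynomial (PowerSeries R)) :
    Polynomial (PowerSeries R) :=
  F.sum fun i a => Polynomial.C (iotaQ p a) * Polynomial.X ^ i

open Finset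

namespace Stmt19Aux

variable {R : Type*} [CommRing R]

@[simp] lemma thetaQ_zero : thetaQ (0 : PowerSeries R) = 0 := by
  ext n; simp [thetaQ]

@[simp] lemma iotaQ_zero (p : ℕ) : iotaQ p (0 : PowerSeries R) = 0 := by
  ext n; simp [iotaQ]

lemma coeff_iotaPoly (p : ℕ) (F : Polynomial (PowerSeries R)) (i : ℕ) :
    (iotaPoly p F).coeff i = iotaQ p (F.coeff i) := by
  rw [iotaPoly, Polynomial.sum, Polynomial.finset_sum_coeff]
  simp only [Polynomial.coeff_C_mul, Polynomial.coeff_X_pow, mul_ite, mul_one, mul_zero]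
  rw [Finset.sum_congr rfl (fun x _ => by rw [show (if i = x then iotaQ p (F.coeff x) else 0)
      = (if x = i then iotaQ p (F.coeff x) else 0) by simp [eq_comm]])]
  rw [Finset.sum_ite_eq' F.support i (fun x => iotaQ p (F.coeff x))]
  split
  · rfl
  · rw [Polynomial.notMem_support_iff.mp ‹_›, iotaQ_zero]

lemma coeff_delta (m : ℤ) (F : Polynomial (PowerSeries R)) (i : ℕ) :
    (delta m F).coeff i = thetaQ (F.coeff i)
      + (if i = 0 then 0 else ((m - ((i - 1 : ℕ) : ℤ) : ℤ) : PowerSeries R) * F.coeff (i - 1)) := by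
  rw [delta, Polynomial.sum, Polynomial.finset_sum_coeff]
  simp only [Polynomial.coeff_add, Polynomial.coeff_C_mul, Polynomial.coeff_X_pow, mul_ite,
    mul_one, mul_zero]
  rw [Finset.sum_add_distrib]
  congr 1
  · rw [Finset.sum_congr rfl (fun x _ => by rw [show (if i = x then thetaQ (F.coeff x) else 0)
        = (if x = i then thetaQ (F.coeff x) else 0) by simp [eq_comm]])]
    rw [Finset.sum_ite_eq' F.support i (fun x => thetaQ (F.coeff x))]
    split
    · rfl
    · rw [Polynomial.notMem_support_iff.mp ‹_›, thetaQ_zero]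
  · rcases Nat.eq_zero_or_pos i with hi | hi
    · subst hi
      rw [if_pos rfl]
      refine Finset.sum_eq_zero fun x _ => ?_
      rw [if_neg (by omega)]
    · obtain ⟨i', rfl⟩ : ∃ i', i = i' + 1 := ⟨i - 1, by omega⟩
      rw [if_neg (by omega)]
      have : ∀ x ∈ F.support,
          (if i' + 1 = x + 1 then ((m - (x : ℤ) : ℤ) : PowerSeries R) * F.coeff x else 0)
          = (if x = i' then ((m - (x : ℤ) : ℤ) : PowerSeries R) * F.coeff x else 0) := by
        intro x _
        congr 1
        simp [eq_comm]
      rw [Finset.sum_congr rfl this,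
        Finset.sum_ite_eq' F.support i' (fun x => ((m - (x : ℤ) : ℤ) : PowerSeries R) * F.coeff x)]
      simp only [Nat.add_sub_cancel]
      split
      · rfl
      · rw [Polynomial.notMem_support_iff.mp ‹_›, mul_zero]

lemma coeff_thetaQ (a : PowerSeries R) (j : ℕ) :
    PowerSeries.coeff j (thetaQ a) = (j : R) * PowerSeries.coeff j a := by
  simp [thetaQ]

lemma coeff_iotaQ (p : ℕ) (a : PowerSeries R) (j : ℕ) :
    PowerSeries.coeff j (iotaQ p a) = if p ∣ j then 0 else PowerSeries.coeff j a := by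
  simp [iotaQ]

lemma coeff_intCast_mul (z : ℤ) (a : PowerSeries R) (j : ℕ) :
    PowerSeries.coeff j (((z : ℤ) : PowerSeries R) * a) = (z : R) * PowerSeries.coeff j a := by
  rw [show ((z : ℤ) : PowerSeries R) = PowerSeries.C ((z : ℤ) : R) by
    rw [map_intCast]]
  rw [PowerSeries.coeff_C_mul]





/-- `Pr A r = ∏_{v<r} (A+v)` -/
def Pr (A : ℤ) (r : ℕ) : ℤ := ∏ v ∈ Finset.range r, (A + v)

@[simp] lemma Pr_zero (A : ℤ) : Pr A 0 = 1 := by simp [Pr]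

lemma Pr_succ (A : ℤ) (r : ℕ) : Pr A (r + 1) = Pr A r * (A + r) := by
  simp [Pr, Finset.prod_range_succ]

lemma Pr_succ' (A : ℤ) (r : ℕ) : Pr A (r + 1) = A * Pr (A + 1) r := by
  rw [Pr, Finset.prod_range_succ']
  rw [mul_comm]
  congr 1
  · push_cast; simp
  · refine Finset.prod_congr rfl fun v _ => ?_
    push_cast
    ring

lemma Pr_eq_ascPochhammer (A : ℤ) (r : ℕ) : (ascPochhammer ℤ r).eval A = Pr A r := by
  induction r with
  | zero => simp
  | succ t ih => rw [ascPochhammer_succ_eval, ih, Pr_succ]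

lemma factorial_dvd_Pr (A : ℤ) (r : ℕ) : (r.factorial : ℤ) ∣ Pr A r := by
  have h := Ring.factorial_nsmul_multichoose_eq_ascPochhammer (R := ℤ) A r
  rw [Polynomial.ascPochhammer_smeval_eq_eval, Pr_eq_ascPochhammer] at h
  exact ⟨Ring.multichoose A r, by rw [← h, nsmul_eq_mul]⟩

lemma Pr_sub_dvd {N A A' : ℤ} (h : N ∣ A' - A) (r : ℕ) : N ∣ Pr A' r - Pr A r := by
  induction r with
  | zero => simp
  | succ t ih =>
    rw [Pr_succ, Pr_succ]
    have : Pr A' t * (A' + t) - Pr A t * (A + t)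
        = (Pr A' t - Pr A t) * (A' + t) + Pr A t * (A' - A) := by ring
    rw [this]
    exact dvd_add (ih.mul_right _) (h.mul_left _)



/-- Euler: if `p ∤ j` and `φ(p^n) ∣ m` then `p^n ∣ j^m - 1`. -/
lemma euler (p n m j : ℕ) (hp : p.Prime) (hn : 1 ≤ n)
    (hm : p ^ (n - 1) * (p - 1) ∣ m) (hj : ¬ p ∣ j) :
    ((p : ℤ)) ^ n ∣ (j : ℤ) ^ m - 1 := by
  haveI : Fact p.Prime := ⟨hp⟩
  have hcop : Nat.Coprime j (p ^ n) :=
    Nat.Coprime.pow_right n (Nat.coprime_comm.mp (hp.coprime_iff_not_dvd.mpr hj))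
  haveI : NeZero (p ^ n) := ⟨pow_ne_zero n hp.pos.ne'⟩
  set u : (ZMod (p ^ n))ˣ := ZMod.unitOfCoprime j hcop with hu
  have htot : u ^ Nat.totient (p ^ n) = 1 := ZMod.pow_totient u
  have htoteq : Nat.totient (p ^ n) = p ^ (n - 1) * (p - 1) := by
    rw [Nat.totient_prime_pow hp (by omega)]
  obtain ⟨c, hc⟩ := hm
  have hum : u ^ m = 1 := by
    rw [hc, ← htoteq, pow_mul, htot, one_pow]
  have hcast : ((j ^ m : ℕ) : ZMod (p ^ n)) = ((1 : ℕ) : ZMod (p ^ n)) := by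
    push_cast
    have : ((j : ZMod (p ^ n))) = (u : ZMod (p ^ n)) := by rw [hu]; simp
    rw [this, ← Units.val_pow_eq_pow_val, hum, Units.val_one]
  have hmod : (j ^ m) ≡ 1 [MOD p ^ n] := (ZMod.natCast_eq_natCast_iff _ _ _).mp hcast
  have := (Nat.modEq_iff_dvd (n := p ^ n) (a := 1) (b := j ^ m)).mp hmod.symm
  push_cast at this ⊢
  exact this

/-- `p^n ∣ m → 1 ≤ e ≤ r → p^n ∣ C(m,e) * r!`. -/
lemma choose_mul_factorial_dvd (p n m e r : ℕ) (hm : p ^ n ∣ m)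
    (he1 : 1 ≤ e) (her : e ≤ r) : p ^ n ∣ m.choose e * r.factorial := by
  rcases Nat.eq_zero_or_pos m with hm0 | hmpos
  · subst hm0
    rw [Nat.choose_eq_zero_of_lt (by omega)]
    simp
  obtain ⟨d, hd⟩ := Nat.dvd_factorial he1 her
  have hkey : m.choose e * e = m * (m - 1).choose (e - 1) := by
    have := Nat.add_one_mul_choose_eq (m - 1) (e - 1)
    have h1 : m - 1 + 1 = m := by omega
    have h2 : e - 1 + 1 = e := by omega
    rw [h2, h1] at this
    omega
  calc p ^ n ∣ m := hm
    _ ∣ m * ((m-1).choose (e-1) * d) := Dvd.intro _ rfl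
    _ = m.choose e * r.factorial := by rw [hd, ← mul_assoc, ← hkey]; ring

/-- Vandermonde difference over ℤ. -/
lemma choose_add_sub (s m r : ℕ) :
    ((s + m).choose r : ℤ) - (s.choose r : ℤ)
      = ∑ e ∈ Finset.range r, ((m.choose (e + 1) : ℤ) * (s.choose (r - (e + 1)) : ℤ)) := by
  have hv := Nat.add_choose_eq m s r
  rw [Finset.Nat.sum_antidiagonal_eq_sum_range_succ (fun x y => m.choose x * s.choose y) r] at hv
  rw [Finset.sum_range_succ' (fun e => m.choose e * s.choose (r - e)) r] at hv
  have : (s + m).choose r = (m + s).choose r := by rw [Nat.add_comm]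
  rw [this, hv]
  push_cast
  simp




end Stmt19Aux
namespace Stmt19Aux

/-- Per-step scalar identity in ℤ. -/
lemma scalar_id (t v j : ℕ) (B : ℤ) :
    ((t + 1).choose (v + 1) : ℤ) * (j : ℤ) ^ (t - v) * Pr B (v + 1)
      = (j : ℤ) * ((t.choose (v + 1) : ℤ) * (j : ℤ) ^ (t - (v + 1)) * Pr (B - 1) (v + 1))
        + (B + t) * ((t.choose v : ℤ) * (j : ℤ) ^ (t - v) * Pr B v) := by
  have hPB : Pr B (v + 1) = Pr B v * (B + v) := Pr_succ B v
  have hPB' : Pr (B - 1) (v + 1) = (B - 1) * Pr B v := by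
    have := Pr_succ' (B - 1) v
    rw [this, sub_add_cancel]
  by_cases hv : v < t
  · have hj : (j : ℤ) * (j : ℤ) ^ (t - (v + 1)) = (j : ℤ) ^ (t - v) := by
      rw [← pow_succ']
      congr 1
      omega
    have pascal : ((t + 1).choose (v + 1) : ℤ) = t.choose v + t.choose (v + 1) := by
      exact_mod_cast Nat.choose_succ_succ' t v
    have hsm : ((t + 1) : ℤ) * (t.choose v : ℤ) = ((t + 1).choose (v + 1) : ℤ) * (v + 1) := by
      exact_mod_cast Nat.add_one_mul_choose_eq t v
    rw [hPB, hPB', ← hj]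
    linear_combination ((j : ℤ) * (j : ℤ) ^ (t - (v + 1)) * Pr B v) * ((B - 1) * pascal - hsm)
  · have h2 : t.choose (v + 1) = 0 := Nat.choose_eq_zero_of_lt (by omega)
    rcases Nat.lt_or_ge t v with hv2 | hv2
    · have h3 : t.choose v = 0 := Nat.choose_eq_zero_of_lt hv2
      have h4 : (t + 1).choose (v + 1) = 0 := Nat.choose_eq_zero_of_lt (by omega)
      rw [h2, h3, h4]
      push_cast
      ring
    · have hveq : v = t := by omega
      subst hveq
      rw [h2, Nat.choose_self, hPB]
      push_cast
      simp
      ring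

end Stmt19Aux
namespace Stmt19Aux

variable {R : Type*} [CommRing R]

/-- Closed formula for the coefficients of the iterated Maaß–Shimura operator. -/
lemma block_coeff (w : ℤ) (t : ℕ) (F : Polynomial (PowerSeries R)) (i j : ℕ) :
    PowerSeries.coeff j ((deltaIter w t F).coeff i)
      = ∑ r ∈ Finset.range (i + 1),
          (t.choose r : R) * (j : R) ^ (t - r) * ((Pr (w + t - i) r : ℤ) : R)
            * PowerSeries.coeff j (F.coeff (i - r)) := by
  induction t generalizing i with
  | zero =>
    rw [show deltaIter w 0 F = F from rfl]
    rw [Finset.sum_eq_single_of_mem 0 (Finset.mem_range.mpr (by omega))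
      (fun r _ hr => by
        rw [Nat.choose_eq_zero_of_lt (by omega)]
        push_cast
        ring)]
    simp
  | succ t ih =>
    rw [show deltaIter w (t + 1) F = delta (w + 2 * t) (deltaIter w t F) from rfl]
    rw [coeff_delta]
    rcases Nat.eq_zero_or_pos i with hi | hi
    · subst hi
      rw [if_pos rfl]
      rw [map_add, coeff_thetaQ, map_zero, add_zero, ih 0]
      rw [Finset.sum_range_one, Finset.sum_range_one]
      simp only [Nat.choose_zero_right, Pr_zero, Nat.sub_zero]
      push_cast
      ring
    · obtain ⟨i', rfl⟩ : ∃ i', i = i' + 1 := ⟨i - 1, by omega⟩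
      rw [if_neg (by omega)]
      simp only [Nat.add_sub_cancel]
      rw [map_add, coeff_thetaQ, coeff_intCast_mul, ih (i' + 1), ih i']
      have hR := Finset.sum_range_succ'
        (fun r => (((t + 1).choose r : ℕ) : R) * (j : R) ^ (t + 1 - r)
          * ((Pr (w + ((t + 1 : ℕ) : ℤ) - ((i' + 1 : ℕ) : ℤ)) r : ℤ) : R)
          * PowerSeries.coeff j (F.coeff (i' + 1 - r))) (i' + 1)
      have hL := Finset.sum_range_succ'
        (fun r => ((t.choose r : ℕ) : R) * (j : R) ^ (t - r)
          * ((Pr (w + (t : ℤ) - ((i' + 1 : ℕ) : ℤ)) r : ℤ) : R)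
          * PowerSeries.coeff j (F.coeff (i' + 1 - r))) (i' + 1)
      rw [hR, hL]
      have hterm : ∀ v ∈ Finset.range (i' + 1),
          (((t + 1).choose (v + 1) : ℕ) : R) * (j : R) ^ (t + 1 - (v + 1))
            * ((Pr (w + ((t + 1 : ℕ) : ℤ) - ((i' + 1 : ℕ) : ℤ)) (v + 1) : ℤ) : R)
            * PowerSeries.coeff j (F.coeff (i' + 1 - (v + 1)))
          = (j : R) * (((t.choose (v + 1) : ℕ) : R) * (j : R) ^ (t - (v + 1))
              * ((Pr (w + (t : ℤ) - ((i' + 1 : ℕ) : ℤ)) (v + 1) : ℤ) : R)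
              * PowerSeries.coeff j (F.coeff (i' + 1 - (v + 1))))
            + ((w + 2 * (t : ℤ) - (i' : ℤ) : ℤ) : R)
              * ((t.choose v : R) * (j : R) ^ (t - v) * ((Pr (w + (t : ℤ) - (i' : ℤ)) v : ℤ) : R)
                * PowerSeries.coeff j (F.coeff (i' - v))) := by
        intro v hv
        have hid := scalar_id t v j (w + t - i')
        have e1 : w + ((t + 1 : ℕ) : ℤ) - ((i' + 1 : ℕ) : ℤ) = w + t - i' := by push_cast; ring
        have e2 : w + (t : ℤ) - ((i' + 1 : ℕ) : ℤ) = (w + t - i') - 1 := by push_cast; ring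
        have e3 : t + 1 - (v + 1) = t - v := by omega
        have e4 : i' + 1 - (v + 1) = i' - v := by omega
        rw [e1, e2, e3, e4]
        have hcast := congrArg (fun z : ℤ => (z : R)) hid
        push_cast at hcast ⊢
        linear_combination (PowerSeries.coeff j (F.coeff (i' - v))) * hcast
      rw [Finset.sum_congr rfl hterm, Finset.sum_add_distrib, ← Finset.mul_sum, ← Finset.mul_sum]
      have h0 : (((t + 1).choose 0 : ℕ) : R) * (j : R) ^ (t + 1 - 0)
            * ((Pr (w + ((t + 1 : ℕ) : ℤ) - ((i' + 1 : ℕ) : ℤ)) 0 : ℤ) : R)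
            * PowerSeries.coeff j (F.coeff (i' + 1 - 0))
          = (j : R) * (((t.choose 0 : ℕ) : R) * (j : R) ^ (t - 0)
            * ((Pr (w + (t : ℤ) - ((i' + 1 : ℕ) : ℤ)) 0 : ℤ) : R)
            * PowerSeries.coeff j (F.coeff (i' + 1 - 0))) := by
        simp only [Nat.choose_zero_right, Pr_zero, Nat.sub_zero]
        push_cast
        ring
      rw [h0]
      push_cast
      ring
end Stmt19Aux
namespace Stmt19Aux

/-- The key scalar congruence. -/
lemma key (p n s m j r : ℕ) (hp : p.Prime) (hp3 : 3 ≤ p) (hn : 1 ≤ n)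
    (hmdvd : p ^ n * (p - 1) ∣ m) (hmbig : n + 1 ≤ m)
    (A A' : ℤ) (hAA : ((p : ℤ)) ^ n ∣ A' - A) :
    ((p : ℤ)) ^ n ∣
      (if p ∣ j then 0 else (s.choose r : ℤ) * (j : ℤ) ^ (s - r) * Pr A r)
        - ((s + m).choose r : ℤ) * (j : ℤ) ^ (s + m - r) * Pr A' r := by
  have hppos : 0 < p ^ n := pow_pos (by omega) n
  have hnp : n < p ^ n := Nat.lt_pow_self (by omega)
  have hm2 : 2 * p ^ n ≤ m := by
    have h1 : p ^ n * (p - 1) ≤ m := Nat.le_of_dvd (by omega) hmdvd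
    have h2 : 2 ≤ p - 1 := by omega
    have : p ^ n * 2 ≤ p ^ n * (p - 1) := Nat.mul_le_mul_left _ h2
    omega
  -- part 1: `(p^n : ℤ) ∣ E * Pr A' r` where `E` is the Vandermonde tail
  have hE : ((p : ℤ)) ^ n ∣
      (∑ e ∈ Finset.range r, ((m.choose (e + 1) : ℤ) * (s.choose (r - (e + 1)) : ℤ))) * Pr A' r := by
    rw [Finset.sum_mul]
    refine Finset.dvd_sum fun e he => ?_
    obtain ⟨Q, hQ⟩ := factorial_dvd_Pr A' r
    have hd : p ^ n ∣ m.choose (e + 1) * r.factorial :=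
      choose_mul_factorial_dvd p n m (e + 1) r (dvd_trans (Dvd.intro _ rfl) hmdvd)
        (by omega) (by exact Finset.mem_range.mp he)
    have : (m.choose (e + 1) : ℤ) * (s.choose (r - (e + 1)) : ℤ) * Pr A' r
        = ((m.choose (e + 1) * r.factorial : ℕ) : ℤ) * ((s.choose (r - (e + 1)) : ℤ) * Q) := by
      rw [hQ]; push_cast; ring
    rw [this]
    exact Dvd.dvd.mul_right (by exact_mod_cast Int.natCast_dvd_natCast.mpr hd) _
  by_cases hj : p ∣ j
  · rw [if_pos hj, zero_sub, dvd_neg]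
    by_cases hr : n ≤ s + m - r
    · have h1 : ((p : ℤ)) ^ n ∣ (j : ℤ) ^ (s + m - r) := by
        have hpj : (p : ℤ) ∣ (j : ℤ) := Int.natCast_dvd_natCast.mpr hj
        exact dvd_trans (pow_dvd_pow_of_dvd hpj n) (pow_dvd_pow _ hr)
      exact (h1.mul_left _).mul_right _
    · -- r is large: p^n ≤ r, so p^n ∣ r! ∣ Pr A' r
      have hrbig : p ^ n ≤ r := by omega
      have h1 : ((p : ℤ)) ^ n ∣ (r.factorial : ℤ) := by
        exact_mod_cast Int.natCast_dvd_natCast.mpr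
          (dvd_trans (Nat.dvd_factorial hppos hrbig) (Nat.factorial_dvd_factorial le_rfl))
      exact ((h1.trans (factorial_dvd_Pr A' r)).mul_left _)
  · rw [if_neg hj]
    have hVd := choose_add_sub s m r
    set E : ℤ := ∑ e ∈ Finset.range r, ((m.choose (e + 1) : ℤ) * (s.choose (r - (e + 1)) : ℤ))
      with hEdef
    have heuler : ((p : ℤ)) ^ n ∣ (j : ℤ) ^ m - 1 :=
      euler p n m j hp hn (dvd_trans (Nat.mul_dvd_mul_right (pow_dvd_pow p (by omega)) _) hmdvd) hj
    have hPr : ((p : ℤ)) ^ n ∣ Pr A' r - Pr A r := Pr_sub_dvd hAA r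
    by_cases hrs : r ≤ s
    · have hexp : s + m - r = (s - r) + m := by omega
      rw [hexp, pow_add]
      have hcen : ((p : ℤ)) ^ n ∣ Pr A r - (j : ℤ) ^ m * Pr A' r := by
        have : Pr A r - (j : ℤ) ^ m * Pr A' r
            = (Pr A r - Pr A' r) + (1 - (j : ℤ) ^ m) * Pr A' r := by ring
        rw [this]
        exact dvd_add ((dvd_sub_comm.mp hPr)) (((dvd_sub_comm.mp heuler)).mul_right _)
      have hsplit : (s.choose r : ℤ) * (j : ℤ) ^ (s - r) * Pr A r
          - ((s + m).choose r : ℤ) * ((j : ℤ) ^ (s - r) * (j : ℤ) ^ m) * Pr A' r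
          = ((s.choose r : ℤ) * (j : ℤ) ^ (s - r)) * (Pr A r - (j : ℤ) ^ m * Pr A' r)
            - ((j : ℤ) ^ (s - r) * (j : ℤ) ^ m) * (E * Pr A' r) := by
        have : ((s + m).choose r : ℤ) = (s.choose r : ℤ) + E := by rw [hEdef]; omega
        rw [this]; ring
      rw [hsplit]
      exact dvd_sub (hcen.mul_left _) (hE.mul_left _)
    · have h0 : (s.choose r : ℤ) = 0 := by
        rw [Nat.choose_eq_zero_of_lt (by omega)]; simp
      have : ((s + m).choose r : ℤ) = E := by rw [hEdef]; omega
      rw [h0, this]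
      have : (0 : ℤ) * (j : ℤ) ^ (s - r) * Pr A r - E * (j : ℤ) ^ (s + m - r) * Pr A' r
          = - ((j : ℤ) ^ (s + m - r) * (E * Pr A' r)) := by ring
      rw [this]
      exact (hE.mul_left _).neg_right

end Stmt19Aux

open Stmt19Aux in
/-- If `k ≡ k' (mod p^n(p−1))`, `s' = s + s₀·p^n(p−1)` with `s₀ ≥ 1` and
`s₀·p^n(p−1) ≥ n+1`, and `f ≡ f' (mod p^n)` coefficientwise with the same `X`-degree, then
`(δ_k^s f)|ι_p ≡ δ_{k'}^{s'} f' (mod p^n)` coefficientwise. -/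
theorem stmt19 (p : ℕ) [Fact p.Prime] (hodd : Odd p) (n : ℕ) (hn : 1 ≤ n)
    (k k' s s' s₀ : ℕ)
    (hkk : ((p : ℤ) ^ n * ((p : ℤ) - 1)) ∣ ((k : ℤ) - (k' : ℤ)))
    (hs' : s' = s + s₀ * (p ^ n * (p - 1)))
    (hs₀ : 1 ≤ s₀) (hbig : n + 1 ≤ s₀ * (p ^ n * (p - 1)))
    (f f' : Polynomial (PowerSeries ℤ_[p]))
    (hdeg : f.natDegree = f'.natDegree)
    (hcong : ∀ i j, (p : ℤ_[p]) ^ n ∣ PowerSeries.coeff j ((f - f').coeff i)) :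
    ∀ i j, (p : ℤ_[p]) ^ n ∣
      PowerSeries.coeff j
        ((iotaPoly p (deltaIter (k : ℤ) s f) - deltaIter (k' : ℤ) s' f').coeff i) := by
  have hp : p.Prime := Fact.out
  have hp3 : 3 ≤ p := by
    obtain ⟨c, hc⟩ := hodd
    have := hp.two_le
    omega
  subst hs'
  set m := s₀ * (p ^ n * (p - 1)) with hm
  have hmdvd : p ^ n * (p - 1) ∣ m := Dvd.intro_left _ rfl
  have hmbig : n + 1 ≤ m := hbig
  intro i j
  rw [Polynomial.coeff_sub, map_sub, coeff_iotaPoly, coeff_iotaQ,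
    block_coeff ((k : ℤ)) s f i j, block_coeff ((k' : ℤ)) (s + m) f' i j]
  set A : ℤ := (k : ℤ) + (s : ℤ) - (i : ℤ) with hA
  set A' : ℤ := (k' : ℤ) + ((s + m : ℕ) : ℤ) - (i : ℤ) with hA'
  have hpnm : (p : ℤ) ^ n ∣ (m : ℤ) := by
    have h1 : p ^ n ∣ m := dvd_trans (Dvd.intro _ rfl) hmdvd
    exact_mod_cast Int.natCast_dvd_natCast.mpr h1
  have hAA : (p : ℤ) ^ n ∣ A' - A := by
    have h1 : (p : ℤ) ^ n ∣ (k : ℤ) - (k' : ℤ) := dvd_trans (Dvd.intro _ rfl) hkk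
    have h2 : A' - A = -(((k : ℤ) - (k' : ℤ))) + (m : ℤ) := by
      rw [hA, hA']; push_cast; ring
    rw [h2]
    exact dvd_add h1.neg_right hpnm
  have castdvd : ∀ z : ℤ, (p : ℤ) ^ n ∣ z → (p : ℤ_[p]) ^ n ∣ ((z : ℤ) : ℤ_[p]) := by
    intro z hz
    have := map_dvd (Int.castRingHom ℤ_[p]) hz
    simp only [map_pow, Int.coe_castRingHom] at this
    push_cast at this
    exact this
  by_cases hj : p ∣ j
  · rw [if_pos hj, zero_sub, dvd_neg]
    refine Finset.dvd_sum fun r hr => ?_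
    have hkey := key p n s m j r hp hp3 hn hmdvd hmbig A A' hAA
    rw [if_pos hj, zero_sub, dvd_neg] at hkey
    have := castdvd _ hkey
    push_cast at this
    exact (this.mul_right _)
  · rw [if_neg hj, ← Finset.sum_sub_distrib]
    refine Finset.dvd_sum fun r hr => ?_
    have hkey := key p n s m j r hp hp3 hn hmdvd hmbig A A' hAA
    rw [if_neg hj] at hkey
    have h1 := castdvd _ hkey
    have h2 := hcong (i - r) j
    have hsplit :
        (s.choose r : ℤ_[p]) * (j : ℤ_[p]) ^ (s - r) * ((Pr A r : ℤ) : ℤ_[p])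
            * PowerSeries.coeff j (f.coeff (i - r))
          - ((s + m).choose r : ℤ_[p]) * (j : ℤ_[p]) ^ (s + m - r) * ((Pr A' r : ℤ) : ℤ_[p])
            * PowerSeries.coeff j (f'.coeff (i - r))
        = (((s.choose r : ℤ) * (j : ℤ) ^ (s - r) * Pr A r
              - ((s + m).choose r : ℤ) * (j : ℤ) ^ (s + m - r) * Pr A' r : ℤ)
            : ℤ_[p]) * PowerSeries.coeff j (f.coeff (i - r))
          + (((((s + m).choose r : ℤ) * (j : ℤ) ^ (s + m - r) * Pr A' r : ℤ)) : ℤ_[p])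
            * PowerSeries.coeff j ((f - f').coeff (i - r)) := by
      rw [Polynomial.coeff_sub, map_sub]
      push_cast
      ring
    rw [hsplit]
    exact dvd_add (h1.mul_right _) (h2.mul_left _)
end
end
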